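/- The distinguishing chromatic index of the cycle C_{2n} is 3 for every n ≥ 4. -/

import Mathlib

open SimpleGraph

/-- Two edges (as unordered pairs) are adjacent if they are distinct and share an endpoint. -/
def EdgesAdj {V : Type*} (e f : Sym2 V) : Prop := e ≠ f ∧ ∃ v, v ∈ e ∧ v ∈ f

/-- A proper edge labeling: adjacent edges of `G` receive different labels. -/
def IsProperEdgeLabeling {V : Type*} (G : SimpleGraph V) (c : Sym2 V → ℕ) : Prop :=
  ∀ e ∈ G.edgeSet, ∀ f ∈ G.edgeSet, EdgesAdj e f → c e ≠ c f

/-- An automorphism `φ` of `G` preserves the edge labeling `c`. -/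
def PreservesEdgeLabeling {V : Type*} (G : SimpleGraph V) (φ : G ≃g G) (c : Sym2 V → ℕ) : Prop :=
  ∀ e ∈ G.edgeSet, c (Sym2.map φ e) = c e

/-- A distinguishing edge labeling: only the identity automorphism preserves it. -/
def IsDistinguishingEdgeLabeling {V : Type*} (G : SimpleGraph V) (c : Sym2 V → ℕ) : Prop :=
  ∀ φ : G ≃g G, PreservesEdgeLabeling G φ c → ∀ v, φ v = v

/-- The chromatic index `χ'(G)`. -/
noncomputable def chromIndex {V : Type*} (G : SimpleGraph V) : ℕ :=
  sInf {d | ∃ c : Sym2 V → ℕ, IsProperEdgeLabeling G c ∧ ∀ e ∈ G.edgeSet, c e < d}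

/-- The distinguishing index `D'(G)`. -/
noncomputable def distIndex {V : Type*} (G : SimpleGraph V) : ℕ :=
  sInf {d | ∃ c : Sym2 V → ℕ, IsDistinguishingEdgeLabeling G c ∧ ∀ e ∈ G.edgeSet, c e < d}

/-- The distinguishing chromatic index `χ'_D(G)`. -/
noncomputable def distChromIndex {V : Type*} (G : SimpleGraph V) : ℕ :=
  sInf {d | ∃ c : Sym2 V → ℕ, IsProperEdgeLabeling G c ∧ IsDistinguishingEdgeLabeling G c ∧
      ∀ e ∈ G.edgeSet, c e < d}

set_option linter.unusedSectionVars false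
set_option linter.unusedVariables false

open Fin.CommRing Fin.NatCast

def L' (k : ℕ) : ℕ := if k < 6 then k % 3 else k % 2

def myc (m : ℕ) [NeZero m] : Sym2 (Fin m) → ℕ :=
  Sym2.lift ⟨fun x y => if y = x + 1 ∧ x ≠ y + 1 then L' x.val
      else if x = y + 1 ∧ y ≠ x + 1 then L' y.val else 0, by
    intro x y
    dsimp only
    split_ifs <;> tauto⟩

lemma mod_two_cases {x m : ℕ} (h : x < 2*m) : x % m = if x < m then x else x - m := by
  split_ifs with h'
  · exact Nat.mod_eq_of_lt h'
  · rw [Nat.mod_eq_sub_mod (by omega), Nat.mod_eq_of_lt (by omega)]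

section
variable {m : ℕ} [NeZero m]

lemma val_one1 (hm : 8 ≤ m) : (1 : Fin m).val = 1 := by
  rw [Fin.val_one']; exact Nat.mod_eq_of_lt (by omega)

lemma val_two1 (hm : 8 ≤ m) : (2 : Fin m).val = 2 := by
  rw [show (2 : Fin m) = 1 + 1 by norm_num, Fin.val_add_eq_ite, val_one1 hm]
  split_ifs <;> omega

lemma add_val (hm : 8 ≤ m) (a b : Fin m) :
    (a + b).val = if a.val + b.val < m then a.val + b.val else a.val + b.val - m := by
  rw [Fin.val_add_eq_ite]
  split_ifs <;> omega

lemma sub_val (hm : 8 ≤ m) (a b : Fin m) :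
    (a - b).val = if b.val ≤ a.val then a.val - b.val else a.val + m - b.val := by
  rw [Fin.sub_def]
  show (m - b.val + a.val) % m = _
  have ha := a.isLt; have hb := b.isLt
  rw [mod_two_cases (by omega)]
  split_ifs <;> omega

lemma succ_val (hm : 8 ≤ m) (i : Fin m) :
    (i + 1).val = if i.val + 1 = m then 0 else i.val + 1 := by
  rw [Fin.val_add_eq_ite, val_one1 hm]
  have := i.isLt
  split_ifs <;> omega

lemma succ_ne (hm : 8 ≤ m) (i : Fin m) : i ≠ i + 1 := by
  intro h
  have h2 := congrArg Fin.val h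
  rw [succ_val hm] at h2
  have := i.isLt
  split_ifs at h2 <;> omega

lemma succ_succ_ne (hm : 8 ≤ m) (i : Fin m) : i ≠ i + 1 + 1 := by
  intro h
  have h2 := congrArg Fin.val h
  rw [succ_val hm, succ_val hm] at h2
  have := i.isLt
  split_ifs at h2 <;> omega

lemma myc_edge (hm : 8 ≤ m) (i : Fin m) : myc m s(i, i+1) = L' i.val := by
  rw [myc, Sym2.lift_mk]
  simp [succ_succ_ne hm i]

lemma adj_iff (hm : 8 ≤ m) (u v : Fin m) :
    (cycleGraph m).Adj u v ↔ u = v + 1 ∨ v = u + 1 := by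
  rw [cycleGraph_adj']
  have h1 : ∀ a b : Fin m, (a - b).val = 1 ↔ a = b + 1 := by
    intro a b
    rw [show (1:ℕ) = (1 : Fin m).val from (val_one1 hm).symm, Fin.val_inj,
      sub_eq_iff_eq_add, add_comm]
  rw [h1, h1]

lemma edge_mem (hm : 8 ≤ m) (i : Fin m) : s(i, i+1) ∈ (cycleGraph m).edgeSet := by
  rw [SimpleGraph.mem_edgeSet, adj_iff hm]
  right; rfl

lemma edge_char (hm : 8 ≤ m) (e : Sym2 (Fin m))
    (he : e ∈ (cycleGraph m).edgeSet) : ∃ i : Fin m, e = s(i, i+1) := by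
  induction e with
  | _ u v =>
    rw [SimpleGraph.mem_edgeSet, adj_iff hm] at he
    rcases he with h | h
    · exact ⟨v, by rw [h]; exact Sym2.eq_swap⟩
    · exact ⟨u, by rw [h]⟩

lemma edges_adj_succ (hm : 8 ≤ m) (i : Fin m) :
    EdgesAdj (s(i, i+1) : Sym2 (Fin m)) s(i+1, i+1+1) := by
  constructor
  · intro h
    rw [Sym2.eq_iff] at h
    rcases h with ⟨h1, _⟩ | ⟨h1, _⟩
    · exact succ_ne hm i h1
    · exact succ_succ_ne hm i h1
  · exact ⟨i + 1, by simp, by simp⟩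

lemma L'_ne_succ (hm : 8 ≤ m) (hev : m % 2 = 0) (i : Fin m) :
    L' i.val ≠ L' ((i+1).val) := by
  rw [succ_val hm]
  have := i.isLt
  unfold L'
  split_ifs <;> omega

lemma myc_proper (hm : 8 ≤ m) (hev : m % 2 = 0) :
    IsProperEdgeLabeling (cycleGraph m) (myc m) := by
  intro e he f hf ⟨hne, v, hve, hvf⟩
  obtain ⟨i, rfl⟩ := edge_char hm e he
  obtain ⟨j, rfl⟩ := edge_char hm f hf
  rw [Sym2.mem_iff] at hve hvf
  rw [myc_edge hm, myc_edge hm]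
  have hij : i = j + 1 ∨ j = i + 1 := by
    rcases hve with rfl | rfl
    · rcases hvf with rfl | h
      · exact absurd rfl hne
      · exact Or.inl h
    · rcases hvf with h | h
      · exact Or.inr h.symm
      · exact absurd (by rw [add_left_inj] at h; rw [h]) hne
  rcases hij with rfl | rfl
  · exact (L'_ne_succ hm hev j).symm
  · exact L'_ne_succ hm hev i

lemma L'_eq_two_iff (k : ℕ) : L' k = 2 ↔ k = 2 ∨ k = 5 := by
  unfold L'; split_ifs <;> omega

lemma aut_form (hm : 8 ≤ m) (φ : cycleGraph m ≃g cycleGraph m) :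
    ∃ ε : Fin m, (ε = 1 ∨ ε = -1) ∧ ∀ v : Fin m, φ v = φ 0 + v * ε := by
  have two_ne : ∀ w : Fin m, w + 1 + 1 ≠ w := fun w h => succ_succ_ne hm w h.symm
  have step : ∀ v : Fin m, φ v = φ (v+1) + 1 ∨ φ (v+1) = φ v + 1 := by
    intro v
    have hadj : (cycleGraph m).Adj (φ v) (φ (v+1)) :=
      φ.map_rel_iff.2 ((adj_iff hm v (v+1)).2 (Or.inr rfl))
    rwa [adj_iff hm] at hadj
  have hstep0 := step 0
  rw [zero_add] at hstep0
  set ε := φ 1 - φ 0 with hεdef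
  have hε : ε = 1 ∨ ε = -1 := by
    rcases hstep0 with h | h
    · right; rw [hεdef, h]; ring
    · left; rw [hεdef, h]; ring
  have key : ∀ k : ℕ, φ ((k : Fin m) + 1) = φ (k : Fin m) + ε := by
    intro k
    induction k with
    | zero =>
      simp only [Nat.cast_zero, zero_add, hεdef]
      abel
    | succ k ih =>
      rw [Nat.cast_add, Nat.cast_one]
      rcases step ((k:Fin m)+1) with h | h
      · rcases hε with h1 | h1
        · exfalso
          rw [ih, h1] at h
          have h2 : φ (↑k : Fin m) = φ ((↑k : Fin m) + 1 + 1) := add_right_cancel h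
          exact two_ne _ (φ.toEquiv.injective h2.symm)
        · rw [h, h1]; ring
      · rcases hε with h1 | h1
        · rw [h, h1]
        · exfalso
          have h2 : φ ((↑k : Fin m) + 1 + 1) = φ (↑k : Fin m) := by
            rw [h, ih, h1]; ring
          exact two_ne _ (φ.toEquiv.injective h2)
  have main : ∀ k : ℕ, φ (k : Fin m) = φ 0 + (k : Fin m) * ε := by
    intro k
    induction k with
    | zero => simp
    | succ k ih =>
      rw [Nat.cast_add, Nat.cast_one, key k, ih]; ring
  refine ⟨ε, hε, fun v => ?_⟩
  have h := main v.val
  rwa [Fin.cast_val_eq_self] at h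

def rotIso (m : ℕ) [NeZero m] : cycleGraph m ≃g cycleGraph m where
  toEquiv := Equiv.addRight (2 : Fin m)
  map_rel_iff' := by
    intro u v
    simp only [Equiv.coe_addRight]
    rw [cycleGraph_adj', cycleGraph_adj', add_sub_add_right_eq_sub, add_sub_add_right_eq_sub]

lemma no_two (hm : 8 ≤ m) (c : Sym2 (Fin m) → ℕ)
    (hp : IsProperEdgeLabeling (cycleGraph m) c)
    (hb : ∀ e ∈ (cycleGraph m).edgeSet, c e < 2)
    (hd : IsDistinguishingEdgeLabeling (cycleGraph m) c) : False := by
  have alt : ∀ i : Fin m, c s(i+1+1, i+1+1+1) = c s(i, i+1) := by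
    intro i
    have h1 := hp _ (edge_mem hm i) _ (edge_mem hm (i+1)) (edges_adj_succ hm i)
    have h2 := hp _ (edge_mem hm (i+1)) _ (edge_mem hm (i+1+1)) (edges_adj_succ hm (i+1))
    have b1 := hb _ (edge_mem hm i)
    have b2 := hb _ (edge_mem hm (i+1))
    have b3 := hb _ (edge_mem hm (i+1+1))
    omega
  have hpres : PreservesEdgeLabeling (cycleGraph m) (rotIso m) c := by
    intro e he
    obtain ⟨i, rfl⟩ := edge_char hm e he
    rw [Sym2.map_pair_eq]
    have e1 : (rotIso m) i = i + 1 + 1 := by show i + 2 = _; ring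
    have e2 : (rotIso m) (i+1) = (i + 1 + 1) + 1 := by show i + 1 + 2 = _; ring
    rw [e1, e2]
    exact alt i
  have h0 : (0 + 2 : Fin m) = 0 := hd (rotIso m) hpres 0
  rw [zero_add] at h0
  have := congrArg Fin.val h0
  rw [val_two1 hm, Fin.val_zero] at this
  omega

set_option maxHeartbeats 2000000 in
lemma myc_disting (hm : 8 ≤ m) :
    IsDistinguishingEdgeLabeling (cycleGraph m) (myc m) := by
  intro φ hpres
  have p0 : (0:ℕ) < m := by omega
  have p2 : (2:ℕ) < m := by omega
  have p3 : (3:ℕ) < m := by omega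
  have p5 : (5:ℕ) < m := by omega
  obtain ⟨ε, hε, hform⟩ := aut_form hm φ
  set a := φ 0 with ha
  have hkey : ∀ i : Fin m, myc m (Sym2.map φ s(i, i+1)) = L' i.val := fun i => by
    rw [hpres _ (edge_mem hm i), myc_edge hm]
  have hav := a.isLt
  rcases hε with rfl | rfl
  · have him : ∀ i : Fin m, L' ((a + i).val) = L' i.val := by
      intro i
      have h := hkey i
      rw [Sym2.map_pair_eq,
        show φ i = a + i by rw [hform i]; ring,
        show φ (i+1) = (a+i)+1 by rw [hform (i+1)]; ring,
        myc_edge hm] at h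
      exact h
    have ha2 := him ⟨2, p2⟩
    have ha5 := him ⟨5, p5⟩
    rw [add_val hm] at ha2 ha5
    simp only [Fin.val_mk] at ha2 ha5
    rw [show L' 2 = 2 from rfl] at ha2
    rw [show L' 5 = 2 from rfl] at ha5
    have hA := (L'_eq_two_iff _).1 ha2
    have hB := (L'_eq_two_iff _).1 ha5
    have ha0 : a.val = 0 := by
      split_ifs at hA hB <;> omega
    have haz : a = 0 := Fin.ext (by rw [ha0, Fin.val_zero])
    intro v
    rw [hform v, mul_one, haz, zero_add]
  · exfalso
    have him : ∀ i : Fin m, L' ((a - i - 1).val) = L' i.val := by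
      intro i
      have h := hkey i
      rw [Sym2.map_pair_eq,
        show φ i = (a - i - 1) + 1 by rw [hform i]; ring,
        show φ (i+1) = a - i - 1 by rw [hform (i+1)]; ring,
        Sym2.eq_swap, myc_edge hm] at h
      exact h
    have h2 := him ⟨2, p2⟩
    have h5 := him ⟨5, p5⟩
    have h0 := him ⟨3, p3⟩
    rw [sub_val hm, sub_val hm, val_one1 hm] at h2
    rw [sub_val hm, sub_val hm, val_one1 hm] at h5
    rw [sub_val hm, sub_val hm, val_one1 hm] at h0
    simp only [Fin.val_mk] at h2 h5 h0
    rw [show L' 2 = 2 from rfl] at h2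
    rw [show L' 5 = 2 from rfl] at h5
    rw [show L' 3 = 0 from rfl] at h0
    have hA := (L'_eq_two_iff _).1 h2
    have hB := (L'_eq_two_iff _).1 h5
    have hA' : a.val = 5 ∨ a.val = 8 ∨ (a.val = 0 ∧ m = 8) := by
      split_ifs at hA <;> omega
    rcases hA' with h | h | h
    · split_ifs at hB <;> omega
    · unfold L' at h0
      split_ifs at h0 <;> omega
    · unfold L' at h0
      split_ifs at h0 <;> omega

end

theorem stmt6 (n : ℕ) (hn : 4 ≤ n) :
    distChromIndex (SimpleGraph.cycleGraph (2 * n)) = 3 := by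
  have hm : 8 ≤ 2 * n := by omega
  haveI : NeZero (2 * n) := ⟨by omega⟩
  rw [distChromIndex]
  set S := {d | ∃ c : Sym2 (Fin (2 * n)) → ℕ,
      IsProperEdgeLabeling (SimpleGraph.cycleGraph (2 * n)) c ∧
      IsDistinguishingEdgeLabeling (SimpleGraph.cycleGraph (2 * n)) c ∧
      ∀ e ∈ (SimpleGraph.cycleGraph (2 * n)).edgeSet, c e < d} with hS
  have h3 : 3 ∈ S := by
    refine ⟨myc (2 * n), myc_proper hm (by omega), myc_disting hm, fun e he => ?_⟩
    obtain ⟨i, rfl⟩ := edge_char hm e he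
    rw [myc_edge hm]
    unfold L'
    split_ifs <;> omega
  have h2 : 2 ∉ S := by
    rintro ⟨c, hp, hd, hb⟩
    exact no_two hm c hp hb hd
  refine le_antisymm (Nat.sInf_le h3) ?_
  by_contra hlt
  push_neg at hlt
  obtain ⟨c, hp, hd, hb⟩ := Nat.sInf_mem (⟨3, h3⟩ : S.Nonempty)
  exact h2 ⟨c, hp, hd, fun e he => lt_of_lt_of_le (hb e he) (by omega)⟩
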